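/- Let A₁ be a real symmetric c×c matrix with A₁·𝟙 = k·𝟙 for some k ∈ ℝ, let A₂ be a real symmetric m×m matrix, and let N = [[A₁, J], [Jᵀ, A₂]] be the (c+m)×(c+m) block matrix, where J is the c×m all-ones matrix (N is the adjacency matrix of the join G₁ ∨ G₂ when A₁, A₂ are adjacency matrices of graphs G₁, G₂ with G₁ regular). If x, y ∈ ℝ^c satisfy 𝟙ᵀx = 𝟙ᵀy = 0 and exp(i·τ·A₁)·x = γ·y for some τ > 0 and γ ∈ ℂ with |γ| = 1, then exp(i·τ·N)·(x, 0) = γ·(y, 0). -/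

import Mathlib

open Matrix

/-- The transition matrix `U_R(t) = exp(i·t·R)` of a real square matrix `R`,
as a complex matrix. -/
noncomputable def U {ι : Type*} [Fintype ι] [DecidableEq ι]
    (R : Matrix ι ι ℝ) (t : ℝ) : Matrix ι ι ℂ :=
  NormedSpace.exp ((Complex.I * (t : ℂ)) • R.map (Complex.ofReal ·))

/-- `A ↦ A *ᵥ v` as a linear map. -/
noncomputable def mulVecL {ι : Type*} [Fintype ι] [DecidableEq ι] (v : ι → ℂ) :
    Matrix ι ι ℂ →ₗ[ℂ] (ι → ℂ) where
  toFun A := A *ᵥ v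
  map_add' A B := Matrix.add_mulVec A B v
  map_smul' a A := Matrix.smul_mulVec a A v

lemma summable_exp_mulVec {ι : Type*} [Fintype ι] [DecidableEq ι]
    (M : Matrix ι ι ℂ) (v : ι → ℂ) :
    Summable (fun n : ℕ => ((n.factorial : ℂ)⁻¹) • (M ^ n *ᵥ v)) := by
  letI : SeminormedRing (Matrix ι ι ℂ) := Matrix.linftyOpSemiNormedRing
  letI : NormedRing (Matrix ι ι ℂ) := Matrix.linftyOpNormedRing
  letI : NormedAlgebra ℂ (Matrix ι ι ℂ) := Matrix.linftyOpNormedAlgebra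
  have hsum : Summable fun n : ℕ => ((n.factorial : ℂ)⁻¹) • M ^ n :=
    NormedSpace.expSeries_summable' M
  have hc : Continuous (mulVecL v) := (mulVecL v).continuous_of_finiteDimensional
  exact (hsum.map (mulVecL v).toAddMonoidHom hc).congr fun n => by simp [mulVecL, Function.comp]

lemma exp_mulVec {ι : Type*} [Fintype ι] [DecidableEq ι]
    (M : Matrix ι ι ℂ) (v : ι → ℂ) :
    NormedSpace.exp M *ᵥ v = ∑' n : ℕ, ((n.factorial : ℂ)⁻¹) • (M ^ n *ᵥ v) := by
  letI : SeminormedRing (Matrix ι ι ℂ) := Matrix.linftyOpSemiNormedRing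
  letI : NormedRing (Matrix ι ι ℂ) := Matrix.linftyOpNormedRing
  letI : NormedAlgebra ℂ (Matrix ι ι ℂ) := Matrix.linftyOpNormedAlgebra
  have hsum : Summable fun n : ℕ => ((n.factorial : ℂ)⁻¹) • M ^ n :=
    NormedSpace.expSeries_summable' M
  let L : Matrix ι ι ℂ →L[ℂ] (ι → ℂ) := LinearMap.toContinuousLinearMap (mulVecL v)
  have := L.map_tsum hsum
  rw [NormedSpace.exp_eq_tsum ℂ]
  simpa [L, mulVecL] using this

/-- `x ↦ Sum.elim x 0` as a linear map. -/
noncomputable def elimL (c m : ℕ) : (Fin c → ℂ) →ₗ[ℂ] (Fin c ⊕ Fin m → ℂ) where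
  toFun x := Sum.elim x 0
  map_add' x y := by funext i; cases i <;> simp
  map_smul' a x := by funext i; cases i <;> simp

/-- Let `N = [[A₁, J], [Jᵀ, A₂]]` (the adjacency matrix of a join with
regular first summand, `A₁·𝟙 = k·𝟙`). If `x, y ∈ ℝ^c` satisfy `𝟙ᵀx = 𝟙ᵀy = 0` and
`exp(iτA₁)·x = γ·y` with `τ > 0`, `|γ| = 1`, then `exp(iτN)·(x,0) = γ·(y,0)`. -/
theorem stmt9 (c m : ℕ)
    (A₁ : Matrix (Fin c) (Fin c) ℝ) (hA₁ : A₁.IsSymm)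
    (k : ℝ) (hreg : A₁ *ᵥ (fun _ => (1 : ℝ)) = k • fun _ => (1 : ℝ))
    (A₂ : Matrix (Fin m) (Fin m) ℝ) (hA₂ : A₂.IsSymm)
    (N : Matrix (Fin c ⊕ Fin m) (Fin c ⊕ Fin m) ℝ)
    (hN : N = Matrix.fromBlocks A₁ (Matrix.of fun _ _ => (1 : ℝ))
      (Matrix.of fun (_ : Fin c) (_ : Fin m) => (1 : ℝ))ᵀ A₂)
    (x y : Fin c → ℝ) (hx : ∑ i, x i = 0) (hy : ∑ i, y i = 0)
    (τ : ℝ) (hτ : 0 < τ) (γ : ℂ) (hγ : ‖γ‖ = 1)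
    (hPST : U A₁ τ *ᵥ (fun i => (x i : ℂ)) = γ • fun i => (y i : ℂ)) :
    U N τ *ᵥ Sum.elim (fun i => (x i : ℂ)) 0 =
      γ • Sum.elim (fun i => (y i : ℂ)) 0 := by
  classical
  set s : ℂ := Complex.I * (τ : ℂ) with hs
  set B : Matrix (Fin c) (Fin c) ℂ := s • A₁.map (Complex.ofReal ·) with hB
  set M : Matrix (Fin c ⊕ Fin m) (Fin c ⊕ Fin m) ℂ := s • N.map (Complex.ofReal ·) with hM
  set w : Fin c → ℂ := fun i => (x i : ℂ) with hw
  have hwsum : ∑ i, w i = 0 := by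
    have : ((∑ i, x i : ℝ) : ℂ) = 0 := by rw [hx]; norm_num
    simpa [hw] using this
  -- column sums of A₁ are k
  have hcol : ∀ j, ∑ i, A₁ i j = k := by
    intro j
    have h1 : ∑ i, A₁ j i = k := by
      have := congrFun hreg j
      simpa [Matrix.mulVec, dotProduct] using this
    calc ∑ i, A₁ i j = ∑ i, A₁ j i := by
          refine Finset.sum_congr rfl fun i _ => ?_
          exact (congrFun (congrFun hA₁ j) i).symm ▸ by
            have := Matrix.IsSymm.apply hA₁ j i
            simpa using this
      _ = k := h1
  -- B preserves zero-sum vectors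
  have hBsum : ∀ v : Fin c → ℂ, ∑ i, v i = 0 → ∑ i, (B *ᵥ v) i = 0 := by
    intro v hv
    have : ∑ i, (B *ᵥ v) i = s * (k * ∑ j, v j) := by
      simp only [hB, Matrix.smul_mulVec, Pi.smul_apply, smul_eq_mul,
        ← Finset.mul_sum]
      congr 1
      simp only [Matrix.mulVec, dotProduct, Matrix.map_apply]
      rw [Finset.sum_comm, Finset.mul_sum]
      refine Finset.sum_congr rfl fun j _ => ?_
      rw [← Finset.sum_mul, ← Complex.ofReal_sum, hcol j]
    rw [this, hv]
    ring
  -- M acts on (v,0) as (B v, 0) for zero-sum v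
  have hMstep : ∀ v : Fin c → ℂ, ∑ i, v i = 0 →
      M *ᵥ Sum.elim v 0 = Sum.elim (B *ᵥ v) 0 := by
    intro v hv
    have hmap : N.map (Complex.ofReal ·) =
        Matrix.fromBlocks (A₁.map (Complex.ofReal ·))
          (Matrix.of fun _ _ => (1 : ℂ))
          (Matrix.of fun (_ : Fin m) (_ : Fin c) => (1 : ℂ))
          (A₂.map (Complex.ofReal ·)) := by
      rw [hN]
      ext i j
      cases i <;> cases j <;> simp [Matrix.fromBlocks, Matrix.map_apply]
    rw [hM, hmap, Matrix.smul_mulVec, Matrix.fromBlocks_mulVec]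
    have h0 : (Sum.elim v (0 : Fin m → ℂ)) ∘ Sum.inr = 0 := rfl
    have h1 : (Sum.elim v (0 : Fin m → ℂ)) ∘ Sum.inl = v := rfl
    rw [h0, h1]
    simp only [Matrix.mulVec_zero, add_zero]
    have h2 : (Matrix.of fun (_ : Fin m) (_ : Fin c) => (1 : ℂ)) *ᵥ v = 0 := by
      funext i
      simp [Matrix.mulVec, dotProduct, hv]
    rw [h2]
    funext i
    cases i <;> simp [hB, Matrix.smul_mulVec]
  -- induction
  have hkey : ∀ n : ℕ, (∑ i, (B ^ n *ᵥ w) i = 0) ∧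
      M ^ n *ᵥ Sum.elim w 0 = Sum.elim (B ^ n *ᵥ w) 0 := by
    intro n
    induction n with
    | zero => simp [hwsum]
    | succ n ih =>
      obtain ⟨ih1, ih2⟩ := ih
      constructor
      · have : B ^ (n + 1) *ᵥ w = B *ᵥ (B ^ n *ᵥ w) := by
          rw [Matrix.mulVec_mulVec, ← pow_succ']
        rw [this]
        exact hBsum _ ih1
      · have h1 : M ^ (n + 1) *ᵥ Sum.elim w 0 = M *ᵥ (M ^ n *ᵥ Sum.elim w 0) := by
          rw [Matrix.mulVec_mulVec, ← pow_succ']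
        have h2 : B ^ (n + 1) *ᵥ w = B *ᵥ (B ^ n *ᵥ w) := by
          rw [Matrix.mulVec_mulVec, ← pow_succ']
        rw [h1, ih2, hMstep _ ih1, h2]
  -- put it together
  have hUN : U N τ *ᵥ Sum.elim w 0 = ∑' n : ℕ, ((n.factorial : ℂ)⁻¹) •
      Sum.elim (B ^ n *ᵥ w) (0 : Fin m → ℂ) := by
    rw [show U N τ = NormedSpace.exp M from rfl, exp_mulVec]
    exact tsum_congr fun n => by rw [(hkey n).2]
  have hUA : U A₁ τ *ᵥ w = ∑' n : ℕ, ((n.factorial : ℂ)⁻¹) • (B ^ n *ᵥ w) := by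
    rw [show U A₁ τ = NormedSpace.exp B from rfl, exp_mulVec]
  -- move Sum.elim out of the tsum
  have hsummable := summable_exp_mulVec B w
  let E : (Fin c → ℂ) →L[ℂ] (Fin c ⊕ Fin m → ℂ) :=
    LinearMap.toContinuousLinearMap (elimL c m)
  have hEtsum := E.map_tsum hsummable
  have hElim : ∀ v : Fin c → ℂ, E v = Sum.elim v 0 := fun v => rfl
  rw [hUN]
  have : (∑' n : ℕ, ((n.factorial : ℂ)⁻¹) • Sum.elim (B ^ n *ᵥ w) (0 : Fin m → ℂ))
      = Sum.elim (∑' n : ℕ, ((n.factorial : ℂ)⁻¹) • (B ^ n *ᵥ w)) 0 := by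
    rw [← hElim, hEtsum]
    refine tsum_congr fun n => ?_
    rw [E.map_smul, hElim]
  rw [this, ← hUA, hPST]
  funext i
  cases i <;> simp
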